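/- Let k be an algebraically closed field of characteristic 2 and let n ≥ 2. If W is a k-linear subspace of sp(2n,k) that is invariant under conjugation by the symplectic group, i.e. g w g⁻¹ ∈ W for every w ∈ W and every g ∈ Sp(2n,k), then either W contains the subalgebra 𝔫 or W is contained in the center of sp(2n,k). -/
import Mathlib


-- Preamble shared by the symplectic-Lie-algebra statements.
open Matrix

noncomputable section

/-- The matrix of the standard symplectic form: `[[0, Iₙ], [−Iₙ, 0]]`. -/
def spJ (k : Type*) [Field k] (n : ℕ) :
    Matrix (Fin n ⊕ Fin n) (Fin n ⊕ Fin n) k :=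
  Matrix.fromBlocks 0 1 (-1) 0

/-- The symplectic Lie algebra `sp(2n,k) = {x : xᵀJ + Jx = 0}`, as a subset of the
matrix Lie algebra (with bracket `⁅x,y⁆ = x*y - y*x`). -/
def spSet (k : Type*) [Field k] (n : ℕ) :
    Set (Matrix (Fin n ⊕ Fin n) (Fin n ⊕ Fin n) k) :=
  {x | xᵀ * spJ k n + spJ k n * x = 0}

/-- The symplectic group `Sp(2n,k) = {g : gᵀJg = J}`. -/
def SpGroup (k : Type*) [Field k] (n : ℕ) :
    Set (Matrix (Fin n ⊕ Fin n) (Fin n ⊕ Fin n) k) :=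
  {g | gᵀ * spJ k n * g = spJ k n}

/-- The derived subalgebra `𝔪 = ⁅sp(2n,k), sp(2n,k)⁆`, i.e. the span of all brackets of
pairs of elements of `sp(2n,k)`. -/
def spm (k : Type*) [Field k] (n : ℕ) :
    Submodule k (Matrix (Fin n ⊕ Fin n) (Fin n ⊕ Fin n) k) :=
  Submodule.span k {m | ∃ x ∈ spSet k n, ∃ y ∈ spSet k n, m = x * y - y * x}

/-- The second derived subalgebra `𝔫 = ⁅𝔪, 𝔪⁆`. -/
def spn (k : Type*) [Field k] (n : ℕ) :
    Submodule k (Matrix (Fin n ⊕ Fin n) (Fin n ⊕ Fin n) k) :=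
  Submodule.span k {m | ∃ x ∈ spm k n, ∃ y ∈ spm k n, m = x * y - y * x}

/-- The center `{x ∈ sp(2n,k) : ⁅x,y⁆ = 0 for all y ∈ sp(2n,k)}`. -/
def spCenter (k : Type*) [Field k] (n : ℕ) :
    Set (Matrix (Fin n ⊕ Fin n) (Fin n ⊕ Fin n) k) :=
  {x ∈ spSet k n | ∀ y ∈ spSet k n, x * y - y * x = 0}


namespace Stmt6Aux

set_option linter.unusedSectionVars false
set_option linter.unusedVariables false

variable {k : Type*} [Field k] [CharP k 2] {n : ℕ}

/-- index swap -/
abbrev swp : Fin n ⊕ Fin n → Fin n ⊕ Fin n := Sum.swap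

lemma swp_swp (a : Fin n ⊕ Fin n) : swp (swp a) = a := Sum.swap_swap a

lemma swp_ne (a : Fin n ⊕ Fin n) : swp a ≠ a := by cases a <;> simp [swp]

lemma matneg (M : Matrix (Fin n ⊕ Fin n) (Fin n ⊕ Fin n) k) : -M = M := by
  ext i j; exact CharTwo.neg_eq _

lemma matsub (M N : Matrix (Fin n ⊕ Fin n) (Fin n ⊕ Fin n) k) : M - N = M + N := by
  ext i j; exact CharTwo.sub_eq_add _ _

lemma mataddself (M : Matrix (Fin n ⊕ Fin n) (Fin n ⊕ Fin n) k) : M + M = 0 := by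
  ext i j; exact CharTwo.add_self_eq_zero _

lemma J_apply (a b : Fin n ⊕ Fin n) : spJ k n a b = if b = swp a then 1 else 0 := by
  rcases a with a | a <;> rcases b with b | b <;>
    simp [spJ, Matrix.fromBlocks, Matrix.one_apply, CharTwo.neg_eq, eq_comm]

lemma J_mul_apply (M : Matrix (Fin n ⊕ Fin n) (Fin n ⊕ Fin n) k) (a b : Fin n ⊕ Fin n) :
    (spJ k n * M) a b = M (swp a) b := by
  rw [Matrix.mul_apply]
  rw [Finset.sum_eq_single (swp a)]
  · rw [J_apply]; simp
  · intro c _ hc; rw [J_apply]; simp [hc]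
  · simp

lemma mul_J_apply (M : Matrix (Fin n ⊕ Fin n) (Fin n ⊕ Fin n) k) (a b : Fin n ⊕ Fin n) :
    (M * spJ k n) a b = M a (swp b) := by
  rw [Matrix.mul_apply]
  rw [Finset.sum_eq_single (swp b)]
  · rw [J_apply, swp_swp]; simp
  · intro c _ hc; rw [J_apply]
    have : b ≠ swp c := by rintro rfl; exact hc (swp_swp c).symm
    simp [this]
  · simp

lemma J_mul_J : spJ k n * spJ k n = 1 := by
  ext a b
  rw [J_mul_apply, J_apply, Matrix.one_apply]
  by_cases h : b = a
  · subst h; simp [swp_swp]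
  · have : b ≠ swp (swp a) := by rw [swp_swp]; exact h
    simp [this, h, Ne.symm h]

lemma J_transpose : (spJ k n)ᵀ = spJ k n := by
  ext a b
  rw [Matrix.transpose_apply, J_apply, J_apply]
  by_cases h : a = swp b
  · subst h; simp [swp_swp]
  · have h' : b ≠ swp a := by rintro rfl; exact h (swp_swp a).symm
    simp [h, h']

lemma J_mul_J_mul (M : Matrix (Fin n ⊕ Fin n) (Fin n ⊕ Fin n) k) :
    spJ k n * (spJ k n * M) = M := by
  rw [← Matrix.mul_assoc, J_mul_J, Matrix.one_mul]


-- CHUNK 2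
lemma mem_spSet_iff (x : Matrix (Fin n ⊕ Fin n) (Fin n ⊕ Fin n) k) :
    x ∈ spSet k n ↔ (spJ k n * x)ᵀ = spJ k n * x := by
  have h : xᵀ * spJ k n = (spJ k n * x)ᵀ := by
    rw [Matrix.transpose_mul, J_transpose]
  constructor
  · intro hx
    have := hx
    simp only [spSet, Set.mem_setOf_eq, h] at this
    have h2 : (spJ k n * x)ᵀ = -(spJ k n * x) := by
      rw [add_comm] at this
      exact eq_neg_of_add_eq_zero_right this
    rw [h2, matneg]
  · intro hx
    simp only [spSet, Set.mem_setOf_eq, h, hx]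
    exact mataddself _

/-- standard basis vector -/
def ee (a : Fin n ⊕ Fin n) : (Fin n ⊕ Fin n) → k := Pi.single a 1

/-- the symplectic form -/
def omg (x y : (Fin n ⊕ Fin n) → k) : k := ∑ c, x c * y (swp c)

lemma omg_comm (x y : (Fin n ⊕ Fin n) → k) : omg x y = omg y x := by
  unfold omg
  rw [← Equiv.sum_comp (Equiv.sumComm (Fin n) (Fin n))]
  simp [Equiv.sumComm_apply, Sum.swap_swap, mul_comm]

lemma omg_add_right (x y z : (Fin n ⊕ Fin n) → k) : omg x (y + z) = omg x y + omg x z := by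
  unfold omg; rw [← Finset.sum_add_distrib]; congr 1; ext c; simp [mul_add]

lemma omg_smul_right (c : k) (x y : (Fin n ⊕ Fin n) → k) : omg x (c • y) = c * omg x y := by
  unfold omg; rw [Finset.mul_sum]; congr 1; ext d; simp; ring

lemma omg_add_left (x y z : (Fin n ⊕ Fin n) → k) : omg (x + y) z = omg x z + omg y z := by
  rw [omg_comm, omg_add_right, omg_comm z x, omg_comm z y]

lemma omg_smul_left (c : k) (x y : (Fin n ⊕ Fin n) → k) : omg (c • x) y = c * omg x y := by
  rw [omg_comm, omg_smul_right, omg_comm]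

lemma omg_self (x : (Fin n ⊕ Fin n) → k) : omg x x = 0 := by
  unfold omg
  rw [Fintype.sum_sum_type]
  simp only [swp, Sum.swap_inl, Sum.swap_inr]
  rw [← Finset.sum_add_distrib]
  apply Finset.sum_eq_zero
  intro t _
  rw [mul_comm]
  exact CharTwo.add_self_eq_zero _

lemma omg_single (x : (Fin n ⊕ Fin n) → k) (d : Fin n ⊕ Fin n) :
    omg x (ee d) = x (swp d) := by
  unfold omg ee
  rw [Finset.sum_eq_single (swp d)]
  · simp [Pi.single_apply, Sum.swap_swap]
  · intro c _ hc
    have : swp c ≠ d := fun hh => hc (by rw [← hh, swp, Sum.swap_swap])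
    rw [Pi.single_apply]
    simp only [this, if_false, mul_zero]
  · simp

lemma omg_eq_zero (x : (Fin n ⊕ Fin n) → k) (h : ∀ u, omg x u = 0) : x = 0 := by
  funext a
  have := h (ee (swp a))
  rw [omg_single] at this
  simpa [swp, Sum.swap_swap] using this

lemma omg_ee (a b : Fin n ⊕ Fin n) : omg (ee a) (ee b) = if b = swp a then (1:k) else 0 := by
  rw [omg_single]
  unfold ee
  rw [Pi.single_apply]
  by_cases h : b = swp a
  · subst h; simp [Sum.swap_swap]
  · have : swp b ≠ a := by rintro rfl; exact h (Sum.swap_swap b).symm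
    simp [this, h]


-- CHUNK 3

/-- `sw v = J v` entrywise. -/
def sw (v : (Fin n ⊕ Fin n) → k) : (Fin n ⊕ Fin n) → k := fun c => v (swp c)

lemma vecMulVec_mul (a b : (Fin n ⊕ Fin n) → k) (M : Matrix (Fin n ⊕ Fin n) (Fin n ⊕ Fin n) k) :
    vecMulVec a b * M = vecMulVec a (fun j => ∑ c, b c * M c j) := by
  ext i j
  rw [Matrix.mul_apply]
  simp only [vecMulVec_apply]
  rw [Finset.mul_sum]
  exact Finset.sum_congr rfl fun c _ => by ring

lemma mul_vecMulVec (a b : (Fin n ⊕ Fin n) → k) (M : Matrix (Fin n ⊕ Fin n) (Fin n ⊕ Fin n) k) :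
    M * vecMulVec a b = vecMulVec (M *ᵥ a) b := by
  ext i j
  rw [Matrix.mul_apply]
  simp only [vecMulVec_apply, Matrix.mulVec, dotProduct]
  rw [Finset.sum_mul]
  exact Finset.sum_congr rfl fun c _ => by ring

lemma vecMulVec_mul_J (a b : (Fin n ⊕ Fin n) → k) :
    vecMulVec a b * spJ k n = vecMulVec a (sw b) := by
  ext i j
  rw [mul_J_apply]
  simp [vecMulVec_apply, sw]

lemma J_mul_vecMulVec (a b : (Fin n ⊕ Fin n) → k) :
    spJ k n * vecMulVec a b = vecMulVec (sw a) b := by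
  ext i j
  rw [J_mul_apply]
  simp [vecMulVec_apply, sw]

lemma vecMulVec_mul_vecMulVec (a b c d : (Fin n ⊕ Fin n) → k) :
    vecMulVec a b * vecMulVec c d = (∑ e, b e * c e) • vecMulVec a d := by
  ext i j
  rw [Matrix.mul_apply]
  simp only [vecMulVec_apply, Matrix.smul_apply, smul_eq_mul]
  rw [Finset.sum_mul]
  exact Finset.sum_congr rfl fun c _ => by ring

lemma sw_dot (u a : (Fin n ⊕ Fin n) → k) : (∑ e, sw u e * a e) = omg u a := by
  rw [omg_comm]
  unfold omg sw
  exact Finset.sum_congr rfl fun c _ => by ring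

/-- rank one element of sp -/
def rnk1 (u : (Fin n ⊕ Fin n) → k) : Matrix (Fin n ⊕ Fin n) (Fin n ⊕ Fin n) k :=
  spJ k n * vecMulVec u u

/-- J(ab^T + ba^T) -/
def rmm (a b : (Fin n ⊕ Fin n) → k) : Matrix (Fin n ⊕ Fin n) (Fin n ⊕ Fin n) k :=
  spJ k n * (vecMulVec a b + vecMulVec b a)

lemma rmm_comm (a b : (Fin n ⊕ Fin n) → k) : rmm a b = rmm b a := by
  unfold rmm; rw [add_comm]

lemma vecMulVec_add_left (a a' b : (Fin n ⊕ Fin n) → k) :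
    vecMulVec (a + a') b = vecMulVec a b + vecMulVec a' b := by
  ext i j; simp [vecMulVec_apply, add_mul]

lemma vecMulVec_add_right (a b b' : (Fin n ⊕ Fin n) → k) :
    vecMulVec a (b + b') = vecMulVec a b + vecMulVec a b' := by
  ext i j; simp [vecMulVec_apply, mul_add]

lemma vecMulVec_smul_left (c : k) (a b : (Fin n ⊕ Fin n) → k) :
    vecMulVec (c • a) b = c • vecMulVec a b := by
  ext i j; simp [vecMulVec_apply]; ring

lemma vecMulVec_smul_right (c : k) (a b : (Fin n ⊕ Fin n) → k) :
    vecMulVec a (c • b) = c • vecMulVec a b := by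
  ext i j; simp [vecMulVec_apply]; ring

lemma rmm_add_left (a a' b : (Fin n ⊕ Fin n) → k) : rmm (a + a') b = rmm a b + rmm a' b := by
  unfold rmm
  rw [vecMulVec_add_left, vecMulVec_add_right, ← Matrix.mul_add]
  congr 1
  abel

lemma rmm_smul_left (c : k) (a b : (Fin n ⊕ Fin n) → k) : rmm (c • a) b = c • rmm a b := by
  unfold rmm
  rw [vecMulVec_smul_left, vecMulVec_smul_right, ← smul_add, Matrix.mul_smul]

lemma rmm_add_right (a b b' : (Fin n ⊕ Fin n) → k) : rmm a (b + b') = rmm a b + rmm a b' := by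
  rw [rmm_comm, rmm_add_left, rmm_comm b a, rmm_comm b' a]

lemma rmm_smul_right (c : k) (a b : (Fin n ⊕ Fin n) → k) : rmm a (c • b) = c • rmm a b := by
  rw [rmm_comm, rmm_smul_left, rmm_comm]

lemma rmm_self (a : (Fin n ⊕ Fin n) → k) : rmm a a = 0 := by
  unfold rmm
  rw [mataddself, Matrix.mul_zero]

lemma rmm_zero_left (b : (Fin n ⊕ Fin n) → k) : rmm 0 b = 0 := by
  simpa using rmm_smul_left (0:k) 0 b

/-- the key bracket formula -/
lemma bracket_rmm (u a b : (Fin n ⊕ Fin n) → k) :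
    rnk1 u * rmm a b + rmm a b * rnk1 u = omg u a • rmm u b + omg u b • rmm u a := by
  unfold rnk1 rmm
  have key1 : spJ k n * vecMulVec u u * (spJ k n * (vecMulVec a b + vecMulVec b a))
      = omg u a • (spJ k n * vecMulVec u b) + omg u b • (spJ k n * vecMulVec u a) := by
    rw [Matrix.mul_assoc (spJ k n) (vecMulVec u u) _,
      ← Matrix.mul_assoc (vecMulVec u u) (spJ k n) _, vecMulVec_mul_J, Matrix.mul_add,
      vecMulVec_mul_vecMulVec, vecMulVec_mul_vecMulVec, sw_dot, sw_dot, Matrix.mul_add,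
      Matrix.mul_smul, Matrix.mul_smul]
  have key2 : (spJ k n * (vecMulVec a b + vecMulVec b a)) * (spJ k n * vecMulVec u u)
      = omg u b • (spJ k n * vecMulVec a u) + omg u a • (spJ k n * vecMulVec b u) := by
    rw [Matrix.mul_assoc (spJ k n) _ _, ← Matrix.mul_assoc (vecMulVec a b + vecMulVec b a) _ _,
      Matrix.add_mul, vecMulVec_mul_J, vecMulVec_mul_J, Matrix.add_mul,
      vecMulVec_mul_vecMulVec, vecMulVec_mul_vecMulVec, sw_dot, sw_dot, omg_comm b u, omg_comm a u,
      Matrix.mul_add, Matrix.mul_smul, Matrix.mul_smul]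
  rw [key1, key2]
  have expand : ∀ x y : (Fin n ⊕ Fin n) → k, spJ k n * (vecMulVec x y + vecMulVec y x)
      = spJ k n * vecMulVec x y + spJ k n * vecMulVec y x := fun x y => Matrix.mul_add _ _ _
  rw [expand, expand, smul_add, smul_add]
  abel

/-- bracket of rnk1 with a sp element -/
lemma bracket_sp (w : Matrix (Fin n ⊕ Fin n) (Fin n ⊕ Fin n) k)
    (hw : (spJ k n * w)ᵀ = spJ k n * w) (v : (Fin n ⊕ Fin n) → k) :
    rnk1 v * w + w * rnk1 v = rmm v (wᵀ *ᵥ v) := by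
  have h1 : wᵀ * spJ k n = spJ k n * w := by
    have h2 : (spJ k n * w)ᵀ = wᵀ * (spJ k n)ᵀ := Matrix.transpose_mul _ _
    rw [J_transpose] at h2
    rw [← h2, hw]
  have hwJ : w * spJ k n = spJ k n * wᵀ := by
    have h4 := congrArg (fun M => spJ k n * M * spJ k n) h1
    simp only [← Matrix.mul_assoc] at h4
    rw [Matrix.mul_assoc (spJ k n * wᵀ), J_mul_J, Matrix.mul_one] at h4
    rw [Matrix.one_mul] at h4
    exact h4.symm
  have e1 : rnk1 v * w = spJ k n * vecMulVec v (wᵀ *ᵥ v) := by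
    unfold rnk1
    have hv : (fun j => ∑ c, v c * w c j) = wᵀ *ᵥ v := by
      funext j
      simp only [Matrix.mulVec, dotProduct, Matrix.transpose_apply]
      exact Finset.sum_congr rfl fun c _ => by ring
    rw [Matrix.mul_assoc, vecMulVec_mul, hv]
  have e2 : w * rnk1 v = spJ k n * vecMulVec (wᵀ *ᵥ v) v := by
    unfold rnk1
    rw [← Matrix.mul_assoc, hwJ, Matrix.mul_assoc, mul_vecMulVec]
  rw [e1, e2]
  unfold rmm
  rw [Matrix.mul_add]


-- CHUNK 4

lemma rnk1_transpose (u : (Fin n ⊕ Fin n) → k) :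
    (rnk1 u)ᵀ = vecMulVec u u * spJ k n := by
  unfold rnk1
  rw [Matrix.transpose_mul, J_transpose]
  congr 1
  ext i j
  simp [vecMulVec_apply, mul_comm]

lemma vv_J_vv (u : (Fin n ⊕ Fin n) → k) :
    vecMulVec u u * spJ k n * vecMulVec u u = 0 := by
  rw [vecMulVec_mul_J, vecMulVec_mul_vecMulVec, sw_dot, omg_self, zero_smul]

lemma rnk1_sq (u : (Fin n ⊕ Fin n) → k) : rnk1 u * rnk1 u = 0 := by
  unfold rnk1
  rw [Matrix.mul_assoc, ← Matrix.mul_assoc (vecMulVec u u), vv_J_vv, Matrix.mul_zero]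

lemma transvection_mem (t : k) (u : (Fin n ⊕ Fin n) → k) :
    (1 + t • rnk1 u) ∈ SpGroup k n := by
  show (1 + t • rnk1 u)ᵀ * spJ k n * (1 + t • rnk1 u) = spJ k n
  rw [Matrix.transpose_add, Matrix.transpose_one, Matrix.transpose_smul, rnk1_transpose]
  rw [Matrix.add_mul, Matrix.one_mul, Matrix.smul_mul, Matrix.add_mul, Matrix.mul_add,
    Matrix.mul_add]
  -- remaining : J + J * (t•e) + (t • (vv*J)) * 1 + ...
  have h1 : vecMulVec u u * spJ k n * spJ k n = vecMulVec u u := by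
    rw [Matrix.mul_assoc, J_mul_J, Matrix.mul_one]
  have h2 : spJ k n * (t • rnk1 u) = t • vecMulVec u u := by
    unfold rnk1
    rw [Matrix.mul_smul, ← Matrix.mul_assoc, J_mul_J, Matrix.one_mul]
  have h3 : (t • vecMulVec u u) * (t • rnk1 u) = 0 := by
    unfold rnk1
    rw [Matrix.smul_mul, Matrix.mul_smul, smul_smul, ← Matrix.mul_assoc, vv_J_vv]
    simp
  rw [Matrix.mul_one, Matrix.mul_one, h1, h2, h3, add_zero, add_assoc, mataddself, add_zero]

lemma transvection_sq (t : k) (u : (Fin n ⊕ Fin n) → k) :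
    (1 + t • rnk1 u) * (1 + t • rnk1 u) = 1 := by
  have h : (t • rnk1 u) * (t • rnk1 u) = 0 := by
    rw [Matrix.smul_mul, Matrix.mul_smul, rnk1_sq]
    simp
  simp only [Matrix.mul_add, Matrix.add_mul, Matrix.mul_one, Matrix.one_mul]
  rw [h, add_zero, add_assoc, mataddself, add_zero]

lemma conj_expand (t : k) (e w : Matrix (Fin n ⊕ Fin n) (Fin n ⊕ Fin n) k) :
    (1 + t • e) * w * (1 + t • e)
      = w + t • (e * w + w * e) + (t*t) • (e * w * e) := by
  simp only [Matrix.mul_add, Matrix.add_mul, Matrix.mul_one, Matrix.one_mul, Matrix.smul_mul,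
    Matrix.mul_smul, smul_smul, smul_add]
  abel

lemma closure_bracket [IsAlgClosed k]
    (W : Submodule k (Matrix (Fin n ⊕ Fin n) (Fin n ⊕ Fin n) k))
    (hWinv : ∀ w ∈ W, ∀ g ∈ SpGroup k n, g * w * g⁻¹ ∈ W) :
    ∀ w ∈ W, ∀ u, rnk1 u * w + w * rnk1 u ∈ W := by
  classical
  intro w hw u
  obtain ⟨c, hc⟩ := Infinite.exists_notMem_finset ({0, 1} : Finset k)
  simp only [Finset.mem_insert, Finset.mem_singleton, not_or] at hc
  obtain ⟨hc0, hc1⟩ := hc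
  have hmem : ∀ t : k, t • (rnk1 u * w + w * rnk1 u) + (t*t) • (rnk1 u * w * rnk1 u) ∈ W := by
    intro t
    have hginv : (1 + t • rnk1 u)⁻¹ = 1 + t • rnk1 u :=
      Matrix.inv_eq_right_inv (transvection_sq t u)
    have := hWinv w hw _ (transvection_mem t u)
    rw [hginv, conj_expand] at this
    have h2 := W.sub_mem this hw
    rw [show w + t • (rnk1 u * w + w * rnk1 u) + (t*t) • (rnk1 u * w * rnk1 u) - w
        = t • (rnk1 u * w + w * rnk1 u) + (t*t) • (rnk1 u * w * rnk1 u) by abel] at h2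
    exact h2
  set s := rnk1 u * w + w * rnk1 u
  set r := rnk1 u * w * rnk1 u
  have h1 : s + r ∈ W := by have := hmem 1; simpa using this
  have h2 : c • s + (c*c) • r ∈ W := hmem c
  have h3 : (c - c*c) • r ∈ W := by
    have := W.sub_mem (W.smul_mem c h1) h2
    rw [show c • (s + r) - (c • s + (c*c) • r) = (c - c*c) • r by
      rw [smul_add, sub_smul]; abel] at this
    exact this
  have hcc : c - c*c ≠ 0 := by
    intro h
    have : c * (1 - c) = 0 := by ring_nf; ring_nf at h; linear_combination h
    rcases mul_eq_zero.mp this with h' | h'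
    · exact hc0 h'
    · exact hc1 (by linear_combination -h')
  have hr : r ∈ W := by
    have := W.smul_mem (c - c*c)⁻¹ h3
    rwa [smul_smul, inv_mul_cancel₀ hcc, one_smul] at this
  have := W.sub_mem h1 hr
  rwa [add_sub_cancel_right] at this


-- CHUNK 5

/-- existence of a vector with prescribed values on two independent functionals -/
lemma exists_omg {v p : (Fin n ⊕ Fin n) → k} (hvp : ∀ c : k, p ≠ c • v) :
    ∃ u, omg v u = 0 ∧ omg p u = 1 := by
  by_cases hv : v = 0
  · subst hv
    have hp : p ≠ 0 := by simpa using hvp 0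
    have : ∃ u, omg p u ≠ 0 := by
      by_contra h
      push_neg at h
      exact hp (omg_eq_zero p h)
    obtain ⟨u0, hu0⟩ := this
    refine ⟨(omg p u0)⁻¹ • u0, ?_, ?_⟩
    · rw [omg_smul_right]
      have : omg (0 : (Fin n ⊕ Fin n) → k) u0 = 0 := by
        have := omg_smul_left (0:k) 0 u0
        simpa using this
      rw [this, mul_zero]
    · rw [omg_smul_right, inv_mul_cancel₀ hu0]
  · have hvne : ∃ u1, omg v u1 ≠ 0 := by
      by_contra h
      push_neg at h
      exact hv (omg_eq_zero v h)
    obtain ⟨u1', hu1'⟩ := hvne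
    set u1 := (omg v u1')⁻¹ • u1' with hu1def
    have hu1 : omg v u1 = 1 := by
      rw [hu1def, omg_smul_right, inv_mul_cancel₀ hu1']
    by_cases H : ∃ u, omg v u = 0 ∧ omg p u ≠ 0
    · obtain ⟨u0, h0, hp0⟩ := H
      exact ⟨(omg p u0)⁻¹ • u0, by rw [omg_smul_right, h0, mul_zero],
        by rw [omg_smul_right, inv_mul_cancel₀ hp0]⟩
    · exfalso
      push_neg at H
      apply hvp (omg p u1)
      have key : ∀ u, omg (p + omg p u1 • v) u = 0 + 0 := by
        intro u
        -- consider u - (omg v u) • u1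
        have h5 : omg v (u + omg v u • u1) = 0 := by
          rw [omg_add_right, omg_smul_right, hu1, mul_one, CharTwo.add_self_eq_zero]
        have h6 := H _ h5
        -- omg p u = omg v u * omg p u1
        have h7 : omg p (u + omg v u • u1) = omg p u + omg v u * omg p u1 := by
          rw [omg_add_right, omg_smul_right]
        rw [h6] at h7
        have h8 : omg p u = omg v u * omg p u1 := by
          have := congrArg (fun z => z + omg v u * omg p u1) h7.symm
          simpa [add_assoc, CharTwo.add_self_eq_zero] using this
        rw [omg_add_left, omg_smul_left, h8]
        rw [mul_comm (omg v u)]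
        rw [CharTwo.add_self_eq_zero]
        simp
      have h0 := omg_eq_zero (p + omg p u1 • v) (by simpa using key)
      have h9 : p = -(omg p u1 • v) := eq_neg_of_add_eq_zero_left h0
      have hneg : -(omg p u1 • v) = omg p u1 • v := by
        funext a; exact CharTwo.neg_eq _
      conv_lhs => rw [h9, hneg]
  -- done

lemma exists_perp (hn : 2 ≤ n) (v y : (Fin n ⊕ Fin n) → k) :
    ∃ z, z ≠ 0 ∧ omg v z = 0 ∧ omg y z = 0 := by
  let f : ((Fin n ⊕ Fin n) → k) →ₗ[k] k × k :=
    { toFun := fun u => (omg v u, omg y u)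
      map_add' := fun a b => by simp [omg_add_right, Prod.ext_iff]
      map_smul' := fun c a => by simp [omg_smul_right, Prod.ext_iff, smul_eq_mul] }
  have hker : LinearMap.ker f ≠ ⊥ := by
    intro hbot
    have hinj : Function.Injective f := LinearMap.ker_eq_bot.mp hbot
    have hle := LinearMap.finrank_le_finrank_of_injective hinj
    rw [Module.finrank_pi] at hle
    have h2 : Module.finrank k (k × k) = 2 := by
      simp [Module.finrank_prod]
    rw [h2] at hle
    simp only [Fintype.card_sum, Fintype.card_fin] at hle
    omega
  obtain ⟨z, hz, hz0⟩ := (Submodule.ne_bot_iff _).mp hker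
  have := LinearMap.mem_ker.mp hz
  have h1 : omg v z = 0 := congrArg Prod.fst this
  have h2 : omg y z = 0 := congrArg Prod.snd this
  exact ⟨z, hz0, h1, h2⟩

variable {W : Submodule k (Matrix (Fin n ⊕ Fin n) (Fin n ⊕ Fin n) k)}

/-- Pi propagation: start -/
lemma L_start (hBr : ∀ w ∈ W, ∀ u, rnk1 u * w + w * rnk1 u ∈ W)
    {v p : (Fin n ⊕ Fin n) → k} (hm : rmm v p ∈ W) (hvp : ∀ c : k, p ≠ c • v) :
    ∀ u, omg v u = 0 → rmm u v ∈ W := by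
  have brk : ∀ u, omg u v • rmm u p + omg u p • rmm u v ∈ W := by
    intro u
    have := hBr (rmm v p) hm u
    rwa [bracket_rmm] at this
  obtain ⟨s, hsv, hsp⟩ := exists_omg hvp
  have hrs : rmm s v ∈ W := by
    have := brk s
    rw [omg_comm s v, hsv, omg_comm s p, hsp, zero_smul, one_smul, zero_add] at this
    exact this
  intro u hu
  have hu' : omg u v = 0 := by rw [omg_comm]; exact hu
  have hs1 : omg s v = 0 := by rw [omg_comm]; exact hsv
  have hs2 : omg s p = 1 := by rw [omg_comm]; exact hsp
  by_cases h : omg u p = 0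
  · have h2 := brk (u + s)
    rw [omg_add_left, hu', hs1, add_zero, zero_smul, zero_add,
      omg_add_left, h, hs2, zero_add, one_smul, rmm_add_left] at h2
    have := W.sub_mem h2 hrs
    rwa [add_sub_cancel_right] at this
  · have h2 := brk u
    rw [hu', zero_smul, zero_add] at h2
    have := W.smul_mem (omg u p)⁻¹ h2
    rwa [smul_smul, inv_mul_cancel₀ h, one_smul] at this

/-- everything isotropic is in W -/
lemma L_all (hn : 2 ≤ n) (hBr : ∀ w ∈ W, ∀ u, rnk1 u * w + w * rnk1 u ∈ W)
    {v : (Fin n ⊕ Fin n) → k} (hv : v ≠ 0)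
    (hPi : ∀ u, omg v u = 0 → rmm u v ∈ W) :
    ∀ x y, omg x y = 0 → rmm x y ∈ W := by
  have PiAll : ∀ y, ∀ u, omg y u = 0 → rmm u y ∈ W := by
    intro y
    by_cases hy0 : y = 0
    · intro u _
      subst hy0
      rw [rmm_comm, rmm_zero_left]
      exact W.zero_mem
    by_cases hcy : ∃ c : k, y = c • v
    · obtain ⟨c, rfl⟩ := hcy
      have hc0 : c ≠ 0 := by rintro rfl; simp at hy0
      intro u hu
      rw [omg_smul_left] at hu
      have hvu : omg v u = 0 := (mul_eq_zero.mp hu).resolve_left hc0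
      rw [rmm_smul_right]
      exact W.smul_mem c (hPi u hvu)
    · push_neg at hcy
      by_cases hperp : omg v y = 0
      · -- direct move
        have hmem : rmm y v ∈ W := hPi y hperp
        have hvy : ∀ c : k, v ≠ c • y := by
          intro c hc
          have hc0 : c ≠ 0 := by rintro rfl; simp at hc; exact hv hc
          exact hcy c⁻¹ (by rw [hc, smul_smul, inv_mul_cancel₀ hc0, one_smul])
        exact L_start hBr hmem hvy
      · obtain ⟨z, hz0, hvz, hyz⟩ := exists_perp hn v y
        have hvz' : ∀ c : k, v ≠ c • z := by
          intro c hc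
          apply hperp
          rw [hc, omg_smul_left, omg_comm z y, hyz, mul_zero]
        have hmz : rmm z v ∈ W := hPi z hvz
        have hPz : ∀ u, omg z u = 0 → rmm u z ∈ W := L_start hBr hmz hvz'
        have hzy : ∀ c : k, z ≠ c • y := by
          intro c hc
          apply hz0
          have : omg v z = c * omg v y := by rw [hc, omg_smul_right]
          rw [hvz] at this
          have hc0 : c = 0 := by
            rcases mul_eq_zero.mp this.symm with h | h
            · exact h
            · exact absurd h hperp
          rw [hc, hc0, zero_smul]
        have hmy : rmm y z ∈ W := hPz y (by rw [omg_comm]; exact hyz)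
        exact L_start hBr hmy hzy
  intro x y hxy
  exact PiAll y x (by rw [omg_comm]; exact hxy)


-- CHUNK 6

def idx : (Fin n ⊕ Fin n) → ℕ := fun a => (finSumFinEquiv a : ℕ)

lemma idx_inj : Function.Injective (idx (n := n)) := fun a b h =>
  finSumFinEquiv.injective (Fin.val_injective h)

def Po (n : ℕ) : Finset ((Fin n ⊕ Fin n) × (Fin n ⊕ Fin n)) :=
  Finset.univ.filter (fun p => idx p.1 < idx p.2)

def stdE (a b : Fin n ⊕ Fin n) : Matrix (Fin n ⊕ Fin n) (Fin n ⊕ Fin n) k :=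
  vecMulVec (ee a) (ee b)

lemma stdE_apply (a b c d : Fin n ⊕ Fin n) :
    (stdE a b : Matrix (Fin n ⊕ Fin n) (Fin n ⊕ Fin n) k) c d
      = if c = a ∧ d = b then 1 else 0 := by
  unfold stdE ee
  rw [vecMulVec_apply, Pi.single_apply, Pi.single_apply]
  by_cases h1 : c = a <;> by_cases h2 : d = b <;> simp [h1, h2]

lemma sym_decomp (S : Matrix (Fin n ⊕ Fin n) (Fin n ⊕ Fin n) k) (hS : Sᵀ = S) :
    S = (∑ a, S a a • stdE a a)
      + ∑ p ∈ Po n, S p.1 p.2 • (stdE p.1 p.2 + stdE p.2 p.1) := by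
  ext c d
  simp only [Matrix.add_apply, Matrix.sum_apply, Matrix.smul_apply, stdE_apply, smul_eq_mul,
    mul_ite, mul_one, mul_zero, mul_add]
  rcases lt_trichotomy (idx c) (idx d) with h | h | h
  · have hcd : c ≠ d := fun hh => by rw [hh] at h; exact lt_irrefl _ h
    have h1 : (∑ a, if c = a ∧ d = a then S a a else 0) = 0 := by
      apply Finset.sum_eq_zero
      intro a _
      have : ¬(c = a ∧ d = a) := fun ⟨ha, hb⟩ => hcd (ha.trans hb.symm)
      simp [this]
    rw [h1, zero_add]
    rw [Finset.sum_eq_single_of_mem ((c, d) : (Fin n ⊕ Fin n) × (Fin n ⊕ Fin n))]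
    · simp [hcd]
    · unfold Po; simp [h]
    · intro p hp hne
      unfold Po at hp
      simp only [Finset.mem_filter, Finset.mem_univ, true_and] at hp
      have h2 : ¬(c = p.1 ∧ d = p.2) := by
        rintro ⟨rfl, rfl⟩
        exact hne (Prod.ext rfl rfl).symm
      have h3 : ¬(c = p.2 ∧ d = p.1) := by
        rintro ⟨rfl, rfl⟩
        exact lt_asymm h hp
      simp [h2, h3]
  · have hcd : c = d := idx_inj h
    subst hcd
    have h2 : (∑ p ∈ Po n, ((if c = p.1 ∧ c = p.2 then S p.1 p.2 else 0)
        + if c = p.2 ∧ c = p.1 then S p.1 p.2 else 0)) = 0 := by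
      apply Finset.sum_eq_zero
      intro p hp
      unfold Po at hp
      simp only [Finset.mem_filter, Finset.mem_univ, true_and] at hp
      have hne : p.1 ≠ p.2 := fun hh => by rw [hh] at hp; exact lt_irrefl _ hp
      have h3 : ¬(c = p.1 ∧ c = p.2) := by rintro ⟨rfl, h5⟩; exact hne h5
      have h4 : ¬(c = p.2 ∧ c = p.1) := by rintro ⟨rfl, h5⟩; exact hne h5.symm
      simp [h3, h4]
    rw [h2, add_zero]
    rw [Finset.sum_eq_single c]
    · simp
    · intro a _ hne; simp [Ne.symm hne]
    · intro hmem; exact absurd (Finset.mem_univ c) hmem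
  · -- d < c
    have hcd : c ≠ d := fun hh => by rw [hh] at h; exact lt_irrefl _ h
    have h1 : (∑ a, if c = a ∧ d = a then S a a else 0) = 0 := by
      apply Finset.sum_eq_zero
      intro a _
      have : ¬(c = a ∧ d = a) := fun ⟨ha, hb⟩ => hcd (ha.trans hb.symm)
      simp [this]
    rw [h1, zero_add]
    rw [Finset.sum_eq_single_of_mem ((d, c) : (Fin n ⊕ Fin n) × (Fin n ⊕ Fin n))]
    · have h5 : S c d = S d c := by
        have h6 := congrFun (congrFun hS c) d
        rw [Matrix.transpose_apply] at h6
        exact h6.symm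
      simp [hcd, h5]
    · unfold Po; simp [h]
    · intro p hp hne
      unfold Po at hp
      simp only [Finset.mem_filter, Finset.mem_univ, true_and] at hp
      have h2 : ¬(c = p.1 ∧ d = p.2) := by
        rintro ⟨rfl, rfl⟩
        exact lt_asymm h hp
      have h3 : ¬(c = p.2 ∧ d = p.1) := by
        rintro ⟨rfl, rfl⟩
        exact hne (Prod.ext rfl rfl).symm
      simp [h2, h3]

lemma stdE_pair_mem (a b : Fin n ⊕ Fin n) :
    (stdE a b : Matrix (Fin n ⊕ Fin n) (Fin n ⊕ Fin n) k) + stdE b a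
      ∈ Submodule.span k {M : Matrix (Fin n ⊕ Fin n) (Fin n ⊕ Fin n) k | ∃ v, M = vecMulVec v v} := by
  have hbig : (vecMulVec (ee a + ee b) (ee a + ee b) : Matrix (Fin n ⊕ Fin n) (Fin n ⊕ Fin n) k)
      = (stdE a a + stdE a b) + (stdE b a + stdE b b) := by
    rw [vecMulVec_add_left, vecMulVec_add_right, vecMulVec_add_right]
    rfl
  have hmem : ∀ v : (Fin n ⊕ Fin n) → k, vecMulVec v v
      ∈ Submodule.span k {M : Matrix (Fin n ⊕ Fin n) (Fin n ⊕ Fin n) k | ∃ v, M = vecMulVec v v} :=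
    fun v => Submodule.subset_span ⟨v, rfl⟩
  have h2 : (stdE a b : Matrix (Fin n ⊕ Fin n) (Fin n ⊕ Fin n) k) + stdE b a
      = vecMulVec (ee a + ee b) (ee a + ee b) - vecMulVec (ee a) (ee a)
        - vecMulVec (ee b) (ee b) := by
    rw [hbig]
    unfold stdE
    abel
  rw [h2]
  exact Submodule.sub_mem _ (Submodule.sub_mem _ (hmem _) (hmem _)) (hmem _)

lemma sym_mem_span (S : Matrix (Fin n ⊕ Fin n) (Fin n ⊕ Fin n) k) (hS : Sᵀ = S) :
    S ∈ Submodule.span k {M : Matrix (Fin n ⊕ Fin n) (Fin n ⊕ Fin n) k | ∃ v, M = vecMulVec v v} := by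
  rw [sym_decomp S hS]
  apply Submodule.add_mem
  · apply Submodule.sum_mem
    intro a _
    exact Submodule.smul_mem _ _ (Submodule.subset_span ⟨ee a, rfl⟩)
  · apply Submodule.sum_mem
    intro p _
    exact Submodule.smul_mem _ _ (stdE_pair_mem p.1 p.2)

lemma spSet_sub_span (x : Matrix (Fin n ⊕ Fin n) (Fin n ⊕ Fin n) k) (hx : x ∈ spSet k n) :
    x ∈ Submodule.span k {M : Matrix (Fin n ⊕ Fin n) (Fin n ⊕ Fin n) k | ∃ v, M = rnk1 v} := by
  have hS : (spJ k n * x)ᵀ = spJ k n * x := (mem_spSet_iff x).mp hx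
  have h1 := sym_mem_span (spJ k n * x) hS
  have h2 : x ∈ Submodule.map (LinearMap.mulLeft k (spJ k n))
      (Submodule.span k {M : Matrix (Fin n ⊕ Fin n) (Fin n ⊕ Fin n) k | ∃ v, M = vecMulVec v v}) := by
    refine ⟨spJ k n * x, h1, ?_⟩
    show spJ k n * (spJ k n * x) = x
    exact J_mul_J_mul x
  rw [Submodule.map_span] at h2
  refine Submodule.span_mono ?_ h2
  rintro M ⟨N, ⟨v, rfl⟩, rfl⟩
  exact ⟨v, rfl⟩

lemma noncentral_exists (w : Matrix (Fin n ⊕ Fin n) (Fin n ⊕ Fin n) k)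
    (hw1 : w ∈ spSet k n) (hw2 : w ∉ spCenter k n) :
    ∃ v, rnk1 v * w + w * rnk1 v ≠ 0 := by
  by_contra h
  push_neg at h
  apply hw2
  refine ⟨hw1, ?_⟩
  intro y hy
  have key : ∀ y, y ∈ Submodule.span k {M : Matrix (Fin n ⊕ Fin n) (Fin n ⊕ Fin n) k | ∃ v, M = rnk1 v}
      → w * y - y * w = 0 := by
    intro y hy
    induction hy using Submodule.span_induction with
    | mem z hz =>
        obtain ⟨v, rfl⟩ := hz
        have h0 := h v
        have h1 : w * rnk1 v = -(rnk1 v * w) := eq_neg_of_add_eq_zero_right h0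
        rw [h1]
        rw [show -(rnk1 v * w) - rnk1 v * w = -(rnk1 v * w + rnk1 v * w) by abel, mataddself,
          neg_zero]
    | zero => simp
    | add a b _ _ ha hb =>
        rw [Matrix.mul_add, Matrix.add_mul]
        rw [show w * a + w * b - (a * w + b * w) = (w * a - a * w) + (w * b - b * w) by abel,
          ha, hb, add_zero]
    | smul c a _ ha =>
        rw [Matrix.mul_smul, Matrix.smul_mul, ← smul_sub, ha, smul_zero]
  exact key y (spSet_sub_span y hy)


-- CHUNK 7

lemma Jbracket (x y : Matrix (Fin n ⊕ Fin n) (Fin n ⊕ Fin n) k) :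
    spJ k n * (x * y - y * x)
      = (spJ k n * x) * spJ k n * (spJ k n * y) - (spJ k n * y) * spJ k n * (spJ k n * x) := by
  rw [Matrix.mul_sub]
  congr 1
  · conv_lhs => rw [show x * y = x * (spJ k n * (spJ k n * y)) by rw [J_mul_J_mul]]
    simp only [Matrix.mul_assoc]
  · conv_lhs => rw [show y * x = y * (spJ k n * (spJ k n * x)) by rw [J_mul_J_mul]]
    simp only [Matrix.mul_assoc]

lemma SJT_transpose (S T : Matrix (Fin n ⊕ Fin n) (Fin n ⊕ Fin n) k)
    (hS : Sᵀ = S) (hT : Tᵀ = T) : (S * spJ k n * T)ᵀ = T * spJ k n * S := by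
  rw [Matrix.transpose_mul, Matrix.transpose_mul, J_transpose, hS, hT, Matrix.mul_assoc]

lemma gen_symm (S T : Matrix (Fin n ⊕ Fin n) (Fin n ⊕ Fin n) k)
    (hS : Sᵀ = S) (hT : Tᵀ = T) :
    (S * spJ k n * T - T * spJ k n * S)ᵀ = S * spJ k n * T - T * spJ k n * S := by
  rw [Matrix.transpose_sub, SJT_transpose S T hS hT, SJT_transpose T S hT hS]
  rw [show T * spJ k n * S - S * spJ k n * T = -(S * spJ k n * T - T * spJ k n * S) by abel]
  exact matneg _

lemma gen_diag (S T : Matrix (Fin n ⊕ Fin n) (Fin n ⊕ Fin n) k)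
    (hS : Sᵀ = S) (hT : Tᵀ = T) (a : Fin n ⊕ Fin n) :
    (S * spJ k n * T - T * spJ k n * S) a a = 0 := by
  have h1 : (T * spJ k n * S) a a = (S * spJ k n * T) a a := by
    have := congrFun (congrFun (SJT_transpose S T hS hT) a) a
    rw [Matrix.transpose_apply] at this
    exact this.symm
  rw [Matrix.sub_apply, h1, sub_self]

lemma gen_tau (S T : Matrix (Fin n ⊕ Fin n) (Fin n ⊕ Fin n) k)
    (hS : Sᵀ = S) (hT : Tᵀ = T) (hSd : ∀ a, S a a = 0) :
    ∑ t : Fin n, (S * spJ k n * T - T * spJ k n * S) (Sum.inl t) (Sum.inr t) = 0 := by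
  have h1 : ∀ t, (T * spJ k n * S) (Sum.inl t) (Sum.inr t)
      = (S * spJ k n * T) (Sum.inr t) (Sum.inl t) := by
    intro t
    have := congrFun (congrFun (SJT_transpose S T hS hT) (Sum.inl t)) (Sum.inr t)
    rw [Matrix.transpose_apply] at this
    exact this.symm
  have h2 : ∀ t, (S * spJ k n * T - T * spJ k n * S) (Sum.inl t) (Sum.inr t)
      = (S * spJ k n * T) (Sum.inl t) (Sum.inr t)
        + (S * spJ k n * T) (Sum.inr t) (Sum.inl t) := by
    intro t
    rw [Matrix.sub_apply, h1, CharTwo.sub_eq_add]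
  -- rewrite as a sum over all indices of f a := (SJT) a (swp a)
  have h3 : (∑ t : Fin n, (S * spJ k n * T - T * spJ k n * S) (Sum.inl t) (Sum.inr t))
      = ∑ a : Fin n ⊕ Fin n, (S * spJ k n * T) a (swp a) := by
    rw [Fintype.sum_sum_type]
    rw [← Finset.sum_add_distrib]
    exact Finset.sum_congr rfl fun t _ => by rw [h2 t]; rfl
  rw [h3]
  -- expand the matrix product
  have h4 : ∀ a, (S * spJ k n * T) a (swp a) = ∑ c, S a (swp c) * T c (swp a) := by
    intro a
    rw [Matrix.mul_apply]
    exact Finset.sum_congr rfl fun c _ => by rw [mul_J_apply]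
  simp_rw [h4]
  rw [← Finset.sum_product']
  apply Finset.sum_involution (fun p _ => (swp p.2, swp p.1))
  · intro p _
    have hfix : S (swp p.2) (swp (swp p.1)) * T (swp p.1) (swp (swp p.2))
        = S p.1 (swp p.2) * T p.2 (swp p.1) := by
      rw [swp_swp, swp_swp]
      have e1 : S (swp p.2) p.1 = S p.1 (swp p.2) := by
        have := congrFun (congrFun hS (swp p.2)) p.1
        rw [Matrix.transpose_apply] at this
        exact this.symm
      have e2 : T (swp p.1) p.2 = T p.2 (swp p.1) := by
        have := congrFun (congrFun hT (swp p.1)) p.2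
        rw [Matrix.transpose_apply] at this
        exact this.symm
      rw [e1, e2]
    rw [hfix]
    exact CharTwo.add_self_eq_zero _
  · intro p _ hne heq
    apply hne
    have h5 : swp p.2 = p.1 := congrArg Prod.fst heq
    rw [h5, hSd, zero_mul]
  · intro p _; exact Finset.mem_product.mpr ⟨Finset.mem_univ _, Finset.mem_univ _⟩
  · intro p _; exact Prod.ext (swp_swp _) (swp_swp _)

lemma spm_alt (x : Matrix (Fin n ⊕ Fin n) (Fin n ⊕ Fin n) k) (hx : x ∈ spm k n) :
    ((spJ k n * x)ᵀ = spJ k n * x) ∧ (∀ a, (spJ k n * x) a a = 0) := by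
  induction hx using Submodule.span_induction with
  | mem z hz =>
      obtain ⟨x, hx, y, hy, rfl⟩ := hz
      rw [Jbracket]
      have hS := (mem_spSet_iff x).mp hx
      have hT := (mem_spSet_iff y).mp hy
      exact ⟨gen_symm _ _ hS hT, gen_diag _ _ hS hT⟩
  | zero => simp
  | add a b _ _ ha hb =>
      rw [Matrix.mul_add]
      refine ⟨by rw [Matrix.transpose_add, ha.1, hb.1], fun c => ?_⟩
      rw [Matrix.add_apply, ha.2, hb.2, add_zero]
  | smul c a _ ha =>
      rw [Matrix.mul_smul]
      refine ⟨by rw [Matrix.transpose_smul, ha.1], fun d => ?_⟩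
      rw [Matrix.smul_apply, ha.2, smul_zero]

lemma spn_cond (x : Matrix (Fin n ⊕ Fin n) (Fin n ⊕ Fin n) k) (hx : x ∈ spn k n) :
    ((spJ k n * x)ᵀ = spJ k n * x) ∧ (∀ a, (spJ k n * x) a a = 0)
      ∧ (∑ t : Fin n, (spJ k n * x) (Sum.inl t) (Sum.inr t) = 0) := by
  induction hx using Submodule.span_induction with
  | mem z hz =>
      obtain ⟨x, hx, y, hy, rfl⟩ := hz
      rw [Jbracket]
      have hS := spm_alt x hx
      have hT := spm_alt y hy
      exact ⟨gen_symm _ _ hS.1 hT.1, gen_diag _ _ hS.1 hT.1, gen_tau _ _ hS.1 hT.1 hS.2⟩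
  | zero => simp
  | add a b _ _ ha hb =>
      rw [Matrix.mul_add]
      refine ⟨by rw [Matrix.transpose_add, ha.1, hb.1], fun c => ?_, ?_⟩
      · rw [Matrix.add_apply, ha.2.1, hb.2.1, add_zero]
      · have : ∀ t : Fin n, (spJ k n * a + spJ k n * b) (Sum.inl t) (Sum.inr t)
            = (spJ k n * a) (Sum.inl t) (Sum.inr t) + (spJ k n * b) (Sum.inl t) (Sum.inr t) :=
          fun t => rfl
        simp_rw [this]
        rw [Finset.sum_add_distrib, ha.2.2, hb.2.2, add_zero]
  | smul c a _ ha =>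
      rw [Matrix.mul_smul]
      refine ⟨by rw [Matrix.transpose_smul, ha.1], fun d => ?_, ?_⟩
      · rw [Matrix.smul_apply, ha.2.1, smul_zero]
      · have : ∀ t : Fin n, (c • (spJ k n * a)) (Sum.inl t) (Sum.inr t)
            = c * (spJ k n * a) (Sum.inl t) (Sum.inr t) := fun t => rfl
        simp_rw [this]
        rw [← Finset.mul_sum, ha.2.2, mul_zero]

lemma idx_inl (t : Fin n) : idx (Sum.inl t : Fin n ⊕ Fin n) = t.val := by
  simp [idx]

lemma idx_inr (t : Fin n) : idx (Sum.inr t : Fin n ⊕ Fin n) = n + t.val := by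
  simp [idx]
  omega

lemma filter_partner :
    (Po n).filter (fun p => p.2 = swp p.1)
      = Finset.image (fun t : Fin n => ((Sum.inl t, Sum.inr t) : (Fin n ⊕ Fin n) × (Fin n ⊕ Fin n)))
          Finset.univ := by
  ext p
  simp only [Finset.mem_filter, Finset.mem_image, Finset.mem_univ, true_and]
  constructor
  · rintro ⟨hp, hsw⟩
    unfold Po at hp
    simp only [Finset.mem_filter, Finset.mem_univ, true_and] at hp
    rcases hp1 : p.1 with t | t
    · refine ⟨t, ?_⟩
      have : p.2 = Sum.inr t := by rw [hsw, hp1]; rfl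
      rw [← hp1, ← this]
    · exfalso
      have h2 : p.2 = Sum.inl t := by rw [hsw, hp1]; rfl
      rw [hp1, h2, idx_inr, idx_inl] at hp
      omega
  · rintro ⟨t, rfl⟩
    refine ⟨?_, rfl⟩
    unfold Po
    simp only [Finset.mem_filter, Finset.mem_univ, true_and]
    rw [idx_inl, idx_inr]
    have := t.isLt
    omega

lemma rmm_ee (a b : Fin n ⊕ Fin n) :
    rmm (ee a) (ee b) = spJ k n * ((stdE a b : Matrix (Fin n ⊕ Fin n) (Fin n ⊕ Fin n) k) + stdE b a) := rfl

/-- the final membership lemma -/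
lemma spn_sub_W (hn : 2 ≤ n) (W : Submodule k (Matrix (Fin n ⊕ Fin n) (Fin n ⊕ Fin n) k))
    (hC : ∀ x y : (Fin n ⊕ Fin n) → k, omg x y = 0 → rmm x y ∈ W) :
    ∀ x ∈ spn k n, x ∈ W := by
  intro x hx
  obtain ⟨hsym, hdiag, htau⟩ := spn_cond x hx
  set S := spJ k n * x with hSdef
  have hx2 : x = ∑ p ∈ Po n, S p.1 p.2 • rmm (ee p.1) (ee p.2) := by
    have hd := sym_decomp S hsym
    have h0 : (∑ a, S a a • (stdE a a : Matrix (Fin n ⊕ Fin n) (Fin n ⊕ Fin n) k)) = 0 :=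
      Finset.sum_eq_zero fun a _ => by rw [hdiag a, zero_smul]
    rw [h0, zero_add] at hd
    calc x = spJ k n * S := (J_mul_J_mul x).symm
    _ = spJ k n * ∑ p ∈ Po n, S p.1 p.2 • (stdE p.1 p.2 + stdE p.2 p.1) := by rw [← hd]
    _ = ∑ p ∈ Po n, S p.1 p.2 • rmm (ee p.1) (ee p.2) := by
        rw [Matrix.mul_sum]
        exact Finset.sum_congr rfl fun p _ => by rw [Matrix.mul_smul, rmm_ee]
  rw [hx2, ← Finset.sum_filter_add_sum_filter_not (Po n) (fun p => p.2 = swp p.1)]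
  apply W.add_mem
  · -- partner part
    rw [filter_partner, Finset.sum_image (fun a _ b _ h => by
      injection h with h1 h2; exact Sum.inl_injective h1)]
    set t0 : Fin n := ⟨0, by omega⟩ with ht0
    set G : Fin n → Matrix (Fin n ⊕ Fin n) (Fin n ⊕ Fin n) k :=
      fun t => rmm (ee (Sum.inl t)) (ee (Sum.inr t)) with hG
    set c : Fin n → k := fun t => S (Sum.inl t) (Sum.inr t) with hc
    have hGmem : ∀ t, G t - G t0 ∈ W := by
      intro t
      by_cases ht : t = t0
      · rw [ht, sub_self]; exact W.zero_mem
      · have hexp : rmm (ee (Sum.inl t) + ee (Sum.inl t0)) (ee (Sum.inr t) + ee (Sum.inr t0))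
            = G t + rmm (ee (Sum.inl t)) (ee (Sum.inr t0))
              + rmm (ee (Sum.inl t0)) (ee (Sum.inr t)) + G t0 := by
          rw [rmm_add_left, rmm_add_right, rmm_add_right, hG]
          abel
        have hmain : rmm (ee (Sum.inl t) + ee (Sum.inl t0)) (ee (Sum.inr t) + ee (Sum.inr t0)) ∈ W := by
          apply hC
          rw [omg_add_left, omg_add_right, omg_add_right, omg_ee, omg_ee, omg_ee, omg_ee]
          have e1 : (Sum.inr t : Fin n ⊕ Fin n) = swp (Sum.inl t) := rfl
          have e2 : (Sum.inr t0 : Fin n ⊕ Fin n) ≠ swp (Sum.inl t) := by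
            simp only [swp, Sum.swap_inl]
            exact fun h => ht (Sum.inr_injective h).symm
          have e3 : (Sum.inr t : Fin n ⊕ Fin n) ≠ swp (Sum.inl t0) := by
            simp only [swp, Sum.swap_inl]
            exact fun h => ht (Sum.inr_injective h)
          have e4 : (Sum.inr t0 : Fin n ⊕ Fin n) = swp (Sum.inl t0) := rfl
          rw [if_pos e1, if_neg e2, if_neg e3, if_pos e4]
          rw [add_zero, zero_add, CharTwo.add_self_eq_zero]
        have hX : rmm (ee (Sum.inl t)) (ee (Sum.inr t0)) ∈ W := by
          apply hC
          rw [omg_ee]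
          have : (Sum.inr t0 : Fin n ⊕ Fin n) ≠ swp (Sum.inl t) := by
            simp only [swp, Sum.swap_inl]
            exact fun h => ht (Sum.inr_injective h).symm
          rw [if_neg this]
        have hY : rmm (ee (Sum.inl t0)) (ee (Sum.inr t)) ∈ W := by
          apply hC
          rw [omg_ee]
          have : (Sum.inr t : Fin n ⊕ Fin n) ≠ swp (Sum.inl t0) := by
            simp only [swp, Sum.swap_inl]
            exact fun h => ht (Sum.inr_injective h)
          rw [if_neg this]
        have : G t - G t0 = rmm (ee (Sum.inl t) + ee (Sum.inl t0)) (ee (Sum.inr t) + ee (Sum.inr t0))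
            - rmm (ee (Sum.inl t)) (ee (Sum.inr t0)) - rmm (ee (Sum.inl t0)) (ee (Sum.inr t)) := by
          rw [hexp, matsub (G t) (G t0)]
          abel
        rw [this]
        exact W.sub_mem (W.sub_mem hmain hX) hY
    have htau' : ∑ t, c t = 0 := htau
    have hsum : (∑ t, c t • G t) = ∑ t, c t • (G t - G t0) := by
      rw [eq_comm, ← sub_eq_zero, ← Finset.sum_sub_distrib]
      have hterm : ∀ t, c t • (G t - G t0) - c t • G t = -(c t • G t0) := by
        intro t
        rw [smul_sub]
        abel
      simp_rw [hterm]
      rw [Finset.sum_neg_distrib, ← Finset.sum_smul, htau', zero_smul, neg_zero]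
    show (∑ t, c t • G t) ∈ W
    rw [hsum]
    exact Submodule.sum_mem W fun t _ => W.smul_mem _ (hGmem t)
  · -- nonpartner part
    apply Submodule.sum_mem
    intro p hp
    simp only [Finset.mem_filter] at hp
    apply W.smul_mem
    apply hC
    rw [omg_ee, if_neg hp.2]


end Stmt6Aux

/-- Let `k` be algebraically closed of characteristic 2 and `n ≥ 2`. If `W` is a
`k`-linear subspace of `sp(2n,k)` invariant under conjugation by `Sp(2n,k)`, then
either `W ⊇ 𝔫` or `W` is contained in the center of `sp(2n,k)`. -/
theorem stmt6 (k : Type*) [Field k] [IsAlgClosed k] [CharP k 2] (n : ℕ) (hn : 2 ≤ n)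
    (W : Submodule k (Matrix (Fin n ⊕ Fin n) (Fin n ⊕ Fin n) k))
    (hWsp : (W : Set (Matrix (Fin n ⊕ Fin n) (Fin n ⊕ Fin n) k)) ⊆ spSet k n)
    (hWinv : ∀ w ∈ W, ∀ g ∈ SpGroup k n, g * w * g⁻¹ ∈ W) :
    (spn k n : Set (Matrix (Fin n ⊕ Fin n) (Fin n ⊕ Fin n) k)) ⊆ W ∨
    (W : Set (Matrix (Fin n ⊕ Fin n) (Fin n ⊕ Fin n) k)) ⊆ spCenter k n := by
  classical
  by_cases hc : (W : Set (Matrix (Fin n ⊕ Fin n) (Fin n ⊕ Fin n) k)) ⊆ spCenter k n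
  · exact Or.inr hc
  · left
    rw [Set.not_subset] at hc
    obtain ⟨w, hwW, hwc⟩ := hc
    have hwsp : w ∈ spSet k n := hWsp hwW
    have hBr : ∀ w' ∈ W, ∀ u, Stmt6Aux.rnk1 u * w' + w' * Stmt6Aux.rnk1 u ∈ W :=
      Stmt6Aux.closure_bracket W hWinv
    obtain ⟨v, hv⟩ := Stmt6Aux.noncentral_exists w hwsp hwc
    have hm0 : Stmt6Aux.rnk1 v * w + w * Stmt6Aux.rnk1 v = Stmt6Aux.rmm v (wᵀ *ᵥ v) :=
      Stmt6Aux.bracket_sp w ((Stmt6Aux.mem_spSet_iff w).mp hwsp) v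
    have hmW : Stmt6Aux.rmm v (wᵀ *ᵥ v) ∈ W := by rw [← hm0]; exact hBr w hwW v
    have hmne : Stmt6Aux.rmm v (wᵀ *ᵥ v) ≠ 0 := by rw [← hm0]; exact hv
    have hvne : v ≠ 0 := by
      rintro rfl
      exact hmne (Stmt6Aux.rmm_zero_left _)
    have hvp : ∀ c : k, wᵀ *ᵥ v ≠ c • v := by
      intro c hcc
      apply hmne
      rw [hcc, Stmt6Aux.rmm_smul_right, Stmt6Aux.rmm_self, smul_zero]
    have hPi := Stmt6Aux.L_start hBr hmW hvp
    have hC := Stmt6Aux.L_all hn hBr hvne hPi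
    intro z hz
    exact Stmt6Aux.spn_sub_W hn W hC z hz
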